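/- Under the partial Cayley transform, writing Ω = i(I_n+W)(I_n−W)⁻¹ for W ∈ 𝔻_n, the imaginary part Y = (Ω − Ω̄)/(2i) satisfies Y = (I_n−W)⁻¹(I_n − WW̄)(I_n−W̄)⁻¹. -/

import Mathlib

open Matrix Complex
open scoped ComplexOrder

/-- Entrywise conjugate of a complex matrix. -/
def conjMat {k l : Type*} (M : Matrix k l ℂ) : Matrix k l ℂ :=
  M.map (starRingEnd ℂ)

/-- Membership in the generalized unit disk `𝔻_n`. -/
def InDisk {n : ℕ} (W : Matrix (Fin n) (Fin n) ℂ) : Prop :=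
  W = Wᵀ ∧ (1 - conjMat W * W).PosDef

lemma conjMat_mul {n : ℕ} (M N : Matrix (Fin n) (Fin n) ℂ) :
    conjMat (M * N) = conjMat M * conjMat N :=
  Matrix.map_mul

lemma conjMat_one {n : ℕ} : conjMat (1 : Matrix (Fin n) (Fin n) ℂ) = 1 := by
  simp [conjMat]

lemma conjMat_add {n : ℕ} (M N : Matrix (Fin n) (Fin n) ℂ) :
    conjMat (M + N) = conjMat M + conjMat N := by
  ext i j; simp [conjMat]

lemma conjMat_smul {n : ℕ} (c : ℂ) (M : Matrix (Fin n) (Fin n) ℂ) :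
    conjMat (c • M) = (starRingEnd ℂ) c • conjMat M := by
  ext i j; simp [conjMat]

lemma conjMat_sub {n : ℕ} (M N : Matrix (Fin n) (Fin n) ℂ) :
    conjMat (M - N) = conjMat M - conjMat N := by
  ext i j; simp [conjMat]

/-- Under the partial Cayley transform `Ω = i(I+W)(I−W)⁻¹`, the imaginary
part `Y = (Ω − Ω̄)/(2i)` satisfies `Y = (I−W)⁻¹(I − W W̄)(I−W̄)⁻¹`. -/
theorem cayley_imaginary_part {n : ℕ} (W : Matrix (Fin n) (Fin n) ℂ)
    (hW : InDisk W) :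
    (2 * Complex.I)⁻¹ •
        (Complex.I • ((1 + W) * (1 - W)⁻¹) -
          conjMat (Complex.I • ((1 + W) * (1 - W)⁻¹))) =
      (1 - W)⁻¹ * (1 - W * conjMat W) * (1 - conjMat W)⁻¹ := by
  obtain ⟨hsymm, hpos⟩ := hW
  have hconj : conjMat W = Wᴴ := by
    ext i j
    have h := congrFun (congrFun hsymm j) i
    simp [conjMat, Matrix.conjTranspose_apply, Matrix.transpose_apply] at h ⊢
    rw [h]
  -- invertibility of 1 - W
  have hdet : IsUnit (1 - W).det := by
    rw [isUnit_iff_ne_zero]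
    intro h
    obtain ⟨v, hv, hmul⟩ := (Matrix.exists_mulVec_eq_zero_iff).mpr h
    have hWv : W *ᵥ v = v := by
      have h2 : v - W *ᵥ v = 0 := by
        simpa [Matrix.sub_mulVec, Matrix.one_mulVec] using hmul
      exact (sub_eq_zero.mp h2).symm
    have hq := hpos.dotProduct_mulVec_pos hv
    have hstar : star v ᵥ* Wᴴ = star v := by
      rw [← Matrix.star_mulVec, hWv]
    have hzero : star v ⬝ᵥ ((1 - conjMat W * W) *ᵥ v) = 0 := by
      rw [hconj, Matrix.sub_mulVec, Matrix.one_mulVec, ← Matrix.mulVec_mulVec, hWv,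
        dotProduct_sub, Matrix.dotProduct_mulVec, hstar, sub_self]
    rw [hzero] at hq
    exact lt_irrefl 0 hq
  have hconjdet : conjMat (1 - W) = ((1 - W)ᵀ)ᴴ := by
    ext i j
    simp [conjMat, Matrix.conjTranspose_apply, Matrix.transpose_apply,
      Matrix.one_apply, eq_comm]
  have hdetB : IsUnit (1 - conjMat W).det := by
    have h1 : (1 - conjMat W) = conjMat (1 - W) := by
      rw [conjMat_sub, conjMat_one]
    rw [h1, hconjdet, Matrix.det_conjTranspose, Matrix.det_transpose]
    exact hdet.star
  -- conjMat of the inverse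
  have hBinv : conjMat ((1 - W)⁻¹) = (1 - conjMat W)⁻¹ := by
    refine (Matrix.inv_eq_right_inv ?_).symm
    rw [show (1 - conjMat W) = conjMat (1 - W) by rw [conjMat_sub, conjMat_one],
      ← conjMat_mul, Matrix.mul_nonsing_inv _ hdet, conjMat_one]
  -- conjugate of the Cayley transform
  have hcX : conjMat (Complex.I • ((1 + W) * (1 - W)⁻¹)) =
      (-Complex.I) • ((1 + conjMat W) * (1 - conjMat W)⁻¹) := by
    have h1 : conjMat ((1 + W) * (1 - W)⁻¹) =
        (1 + conjMat W) * (1 - conjMat W)⁻¹ := by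
      rw [conjMat_mul, conjMat_add, conjMat_one, hBinv]
    rw [conjMat_smul, h1, Complex.conj_I]
  rw [hcX]
  have hAX : (1 - W) * ((1 + W) * (1 - W)⁻¹) = 1 + W := by
    rw [← Matrix.mul_assoc]
    have h : (1 - W) * (1 + W) = (1 + W) * (1 - W) := by noncomm_ring
    rw [h, Matrix.mul_assoc, Matrix.mul_nonsing_inv _ hdet, Matrix.mul_one]
  -- reduce the scalar part
  have hscal : (2 * Complex.I)⁻¹ •
      (Complex.I • ((1 + W) * (1 - W)⁻¹) -
        (-Complex.I) • ((1 + conjMat W) * (1 - conjMat W)⁻¹)) =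
      (2 : ℂ)⁻¹ • ((1 + W) * (1 - W)⁻¹ + (1 + conjMat W) * (1 - conjMat W)⁻¹) := by
    rw [neg_smul, sub_neg_eq_add, ← smul_add, smul_smul]
    congr 1
    field_simp
  rw [hscal]
  -- cancellation
  have cancel : ∀ P Q : Matrix (Fin n) (Fin n) ℂ,
      (1 - W) * P * (1 - conjMat W) = (1 - W) * Q * (1 - conjMat W) → P = Q := by
    intro P Q h
    have h2 := congrArg (fun M => (1 - W)⁻¹ * M * (1 - conjMat W)⁻¹) h
    simpa [Matrix.mul_assoc, Matrix.nonsing_inv_mul_cancel_left _ _ hdet,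
      Matrix.mul_nonsing_inv_cancel_right _ _ hdetB,
      Matrix.mul_nonsing_inv _ hdetB, Matrix.mul_one] using h2
  apply cancel
  have hRHS : (1 - W) * ((1 - W)⁻¹ * (1 - W * conjMat W) * (1 - conjMat W)⁻¹) *
      (1 - conjMat W) = 1 - W * conjMat W := by
    rw [Matrix.mul_assoc ((1 - W)⁻¹), ← Matrix.mul_assoc (1 - W),
      Matrix.mul_nonsing_inv _ hdet, Matrix.one_mul, Matrix.mul_assoc,
      Matrix.nonsing_inv_mul _ hdetB, Matrix.mul_one]
  rw [hRHS, Matrix.mul_smul, Matrix.smul_mul]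
  have hbr : (1 - W) * ((1 + W) * (1 - W)⁻¹ + (1 + conjMat W) * (1 - conjMat W)⁻¹) *
      (1 - conjMat W) = (1 + W) * (1 - conjMat W) + (1 - W) * (1 + conjMat W) := by
    rw [Matrix.mul_add, hAX, Matrix.add_mul]
    congr 1
    rw [Matrix.mul_assoc (1 - W), Matrix.mul_assoc (1 + conjMat W),
      Matrix.nonsing_inv_mul _ hdetB, Matrix.mul_one]
  rw [hbr]
  have hexp : (1 + W) * (1 - conjMat W) + (1 - W) * (1 + conjMat W) =
      (2 : Matrix (Fin n) (Fin n) ℂ) * (1 - W * conjMat W) := by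
    noncomm_ring
  rw [hexp, two_mul, ← two_smul ℂ, smul_smul]
  norm_num
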